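/- The shortest admissible loop of length greater than 4 has length 8, and any admissible loop of length 8 is, up to isometry of the lattice, the 3×3 square with its center removed. -/

import Mathlib

open scoped Classical

/-- Two cells of `ℤ²` are adjacent iff they differ by a unit vector. -/
def Adj (p q : ℤ × ℤ) : Prop :=
  (p.1 - q.1).natAbs + (p.2 - q.2).natAbs = 1

/-- A finite set of cells is connected under edge-adjacency. -/
def ConnectedIn (S : Finset (ℤ × ℤ)) : Prop :=
  ∀ p ∈ S, ∀ q ∈ S,
    Relation.ReflTransGen (fun a b => a ∈ S ∧ b ∈ S ∧ Adj a b) p q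

/-- A polyomino: a finite nonempty edge-connected subset of `ℤ²`. -/
def IsPolyomino (S : Finset (ℤ × ℤ)) : Prop :=
  S.Nonempty ∧ ConnectedIn S

/-- Admissible: no four cells equally spaced on a straight line. -/
def Admissible (S : Finset (ℤ × ℤ)) : Prop :=
  ¬ ∃ (p v : ℤ × ℤ), v ≠ 0 ∧ p ∈ S ∧ p + v ∈ S ∧
      p + (2 : ℤ) • v ∈ S ∧ p + (3 : ℤ) • v ∈ S

/-- Degree of a cell in the adjacency graph restricted to `S`. -/
noncomputable def degIn (S : Finset (ℤ × ℤ)) (p : ℤ × ℤ) : ℕ :=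
  (S.filter fun q => Adj p q).card

/-- A path polyomino: either a single cell, or a connected set where every cell
has degree at most 2 and exactly two cells have degree 1. -/
def IsPathPoly (S : Finset (ℤ × ℤ)) : Prop :=
  IsPolyomino S ∧
    (S.card = 1 ∨
      ((∀ p ∈ S, degIn S p ≤ 2) ∧ (S.filter fun p => degIn S p = 1).card = 2))

/-- A loop: a polyomino all of whose cells have degree exactly 2. -/
def IsLoop (S : Finset (ℤ × ℤ)) : Prop :=
  IsPolyomino S ∧ ∀ p ∈ S, degIn S p = 2

/-- Graph distance within `S` (shortest walk staying in `S`). -/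
noncomputable def distIn (S : Finset (ℤ × ℤ)) (p q : ℤ × ℤ) : ℕ :=
  sInf {n | ∃ f : ℕ → ℤ × ℤ, f 0 = p ∧ f n = q ∧ (∀ i ≤ n, f i ∈ S) ∧
    ∀ i < n, Adj (f i) (f (i + 1))}

/-- Graph diameter of `S`. -/
noncomputable def diamIn (S : Finset (ℤ × ℤ)) : ℕ :=
  sSup {d | ∃ p ∈ S, ∃ q ∈ S, distIn S p q = d}

/-- Isometries of the square lattice: bijections of `ℤ²` preserving squared
Euclidean distance (compositions of translations, 90° rotations, reflections). -/
def IsLatticeIso (f : ℤ × ℤ → ℤ × ℤ) : Prop :=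
  Function.Bijective f ∧ ∀ p q : ℤ × ℤ,
    ((f p).1 - (f q).1) ^ 2 + ((f p).2 - (f q).2) ^ 2 =
      (p.1 - q.1) ^ 2 + (p.2 - q.2) ^ 2

/-- Two finite cell sets are equivalent up to a lattice isometry. -/
def IsoEquiv (S T : Finset (ℤ × ℤ)) : Prop :=
  ∃ f, IsLatticeIso f ∧ S.image f = T

instance adjDec (p q : ℤ × ℤ) : Decidable (Adj p q) := by unfold Adj; infer_instance

lemma adj_iff' {x y x' y' : ℤ} : Adj (x, y) (x', y') ↔ (x - x').natAbs + (y - y').natAbs = 1 :=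
  Iff.rfl

lemma adj_symm {p q : ℤ × ℤ} (h : Adj p q) : Adj q p := by
  obtain ⟨a, b⟩ := p; obtain ⟨c, d⟩ := q
  rw [adj_iff'] at *
  omega

lemma adj_cases {p q : ℤ × ℤ} (h : Adj p q) :
    q = (p.1 + 1, p.2) ∨ q = (p.1 - 1, p.2) ∨ q = (p.1, p.2 + 1) ∨ q = (p.1, p.2 - 1) := by
  obtain ⟨a, b⟩ := p; obtain ⟨c, d⟩ := q
  rw [adj_iff'] at h
  simp only [Prod.mk.injEq]
  omega

lemma degIn_eq (S : Finset (ℤ × ℤ)) (p : ℤ × ℤ) :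
    degIn S p = (S.filter fun q => Adj p q).card := by
  unfold degIn
  congr 1
  apply Finset.filter_congr_decidable

lemma deg2_pair {S : Finset (ℤ × ℤ)} {p : ℤ × ℤ} (h : degIn S p = 2) :
    ∃ q1 q2 : ℤ × ℤ, q1 ≠ q2 ∧ q1 ∈ S ∧ Adj p q1 ∧ q2 ∈ S ∧ Adj p q2 ∧
      (∀ q ∈ S, Adj p q → q = q1 ∨ q = q2) := by
  rw [degIn_eq] at h
  obtain ⟨a, b, hab, he⟩ := Finset.card_eq_two.mp h
  have ha : a ∈ S.filter fun q => Adj p q := by rw [he]; simp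
  have hb : b ∈ S.filter fun q => Adj p q := by rw [he]; simp
  rw [Finset.mem_filter] at ha hb
  refine ⟨a, b, hab, ha.1, ha.2, hb.1, hb.2, ?_⟩
  intro q hq hj
  have : q ∈ S.filter fun q => Adj p q := Finset.mem_filter.mpr ⟨hq, hj⟩
  rw [he] at this
  simpa using this

lemma deg2_only {S : Finset (ℤ × ℤ)} {p a b : ℤ × ℤ} (h : degIn S p = 2)
    (ha : a ∈ S) (haj : Adj p a) (hb : b ∈ S) (hbj : Adj p b) (hab : a ≠ b) :
    ∀ q ∈ S, Adj p q → q = a ∨ q = b := by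
  obtain ⟨q1, q2, h12, hq1, hj1, hq2, hj2, hall⟩ := deg2_pair h
  have Ha := hall a ha haj
  have Hb := hall b hb hbj
  intro q hq hqj
  have Hq := hall q hq hqj
  rcases Ha with rfl | rfl <;> rcases Hb with rfl | rfl <;> tauto

/-- x-coordinates of the cells of `S` in row `k`. -/
def rowX (S : Finset (ℤ × ℤ)) (k : ℤ) : Finset ℤ :=
  (S.filter fun p => p.2 = k).image Prod.fst

lemma mem_rowX {S : Finset (ℤ × ℤ)} {k x : ℤ} : x ∈ rowX S k ↔ (x, k) ∈ S := by
  unfold rowX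
  simp only [Finset.mem_image, Finset.mem_filter]
  constructor
  · rintro ⟨⟨a, b⟩, ⟨hp, rfl⟩, rfl⟩; exact hp
  · intro h; exact ⟨(x, k), ⟨h, rfl⟩, rfl⟩

lemma card_rowX (S : Finset (ℤ × ℤ)) (k : ℤ) :
    (rowX S k).card = (S.filter fun p => p.2 = k).card := by
  unfold rowX
  apply Finset.card_image_of_injOn
  rintro ⟨a, b⟩ ha ⟨c, d⟩ hc (h : a = c)
  simp only [Finset.mem_coe, Finset.mem_filter] at ha hc
  simp [h, ha.2, hc.2]

lemma card_three_rows {S : Finset (ℤ × ℤ)} {y0 : ℤ}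
    (hrows : ∀ p ∈ S, p.2 = y0 ∨ p.2 = y0 + 1 ∨ p.2 = y0 + 2) :
    S.card = (rowX S y0).card + (rowX S (y0 + 1)).card + (rowX S (y0 + 2)).card := by
  rw [card_rowX, card_rowX, card_rowX]
  have hd1 : Disjoint (S.filter fun p => p.2 = y0) (S.filter fun p => p.2 = y0 + 1) := by
    rw [Finset.disjoint_left]; intro p hp hq
    simp only [Finset.mem_filter] at hp hq; omega
  have hd2 : Disjoint ((S.filter fun p => p.2 = y0) ∪ (S.filter fun p => p.2 = y0 + 1))
      (S.filter fun p => p.2 = y0 + 2) := by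
    rw [Finset.disjoint_left]; intro p hp hq
    simp only [Finset.mem_union, Finset.mem_filter] at hp hq; omega
  have hu : S = ((S.filter fun p => p.2 = y0) ∪ (S.filter fun p => p.2 = y0 + 1)) ∪
      (S.filter fun p => p.2 = y0 + 2) := by
    ext p
    simp only [Finset.mem_union, Finset.mem_filter]
    constructor
    · intro hp; rcases hrows p hp with h | h | h <;> tauto
    · tauto
  conv_lhs => rw [hu]
  rw [Finset.card_union_of_disjoint hd2, Finset.card_union_of_disjoint hd1]

lemma card_four_rows_le {S : Finset (ℤ × ℤ)} {k1 k2 k3 k4 : ℤ}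
    (h12 : k1 ≠ k2) (h13 : k1 ≠ k3) (h14 : k1 ≠ k4) (h23 : k2 ≠ k3) (h24 : k2 ≠ k4)
    (h34 : k3 ≠ k4) :
    (rowX S k1).card + (rowX S k2).card + (rowX S k3).card + (rowX S k4).card ≤ S.card := by
  rw [card_rowX, card_rowX, card_rowX, card_rowX]
  have key : ∀ᵉ (A ⊆ S) (B ⊆ S), Disjoint A B → A.card + B.card ≤ S.card → True := fun _ _ _ _ _ _ => trivial
  clear key
  have hsub : (((S.filter fun p => p.2 = k1) ∪ (S.filter fun p => p.2 = k2)) ∪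
      ((S.filter fun p => p.2 = k3) ∪ (S.filter fun p => p.2 = k4))) ⊆ S := by
    intro p hp
    simp only [Finset.mem_union, Finset.mem_filter] at hp
    tauto
  have := Finset.card_le_card hsub
  have e1 : (((S.filter fun p => p.2 = k1) ∪ (S.filter fun p => p.2 = k2)) ∪
      ((S.filter fun p => p.2 = k3) ∪ (S.filter fun p => p.2 = k4))).card
      = (S.filter fun p => p.2 = k1).card + (S.filter fun p => p.2 = k2).card
        + (S.filter fun p => p.2 = k3).card + (S.filter fun p => p.2 = k4).card := by
    rw [Finset.card_union_of_disjoint, Finset.card_union_of_disjoint, Finset.card_union_of_disjoint]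
    · ring
    · rw [Finset.disjoint_left]; intro p hp hq
      simp only [Finset.mem_filter] at hp hq; omega
    · rw [Finset.disjoint_left]; intro p hp hq
      simp only [Finset.mem_filter] at hp hq; omega
    · rw [Finset.disjoint_left]; intro p hp hq
      simp only [Finset.mem_union, Finset.mem_filter] at hp hq
      rcases hq with hq | hq <;> omega
  omega

lemma card_le_span {T : Finset ℤ} {a b : ℤ} (h : ∀ x ∈ T, a ≤ x ∧ x ≤ b) :
    T.card ≤ (b + 1 - a).toNat := by
  have hsub : T ⊆ Finset.Icc a b := by
    intro x hx; rw [Finset.mem_Icc]; exact h x hx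
  have := Finset.card_le_card hsub
  rwa [Int.card_Icc] at this

lemma two_le_card' {T : Finset ℤ} (hne : T.Nonempty)
    (hA : ∀ x ∈ T, x - 1 ∈ T ∨ x + 1 ∈ T) : 2 ≤ T.card := by
  set M := T.max' hne with hM
  have hMem : M ∈ T := T.max'_mem hne
  have h1 : M - 1 ∈ T := by
    rcases hA M hMem with h | h
    · exact h
    · have := T.le_max' _ h; omega
  have : ({M - 1, M} : Finset ℤ) ⊆ T := by
    intro x hx; simp at hx; rcases hx with rfl | rfl <;> assumption
  have hc := Finset.card_le_card this
  rwa [Finset.card_pair (by omega)] at hc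

lemma run2' {T : Finset ℤ} (hne : T.Nonempty) (hA : ∀ x ∈ T, x - 1 ∈ T ∨ x + 1 ∈ T)
    (hc : T.card = 2) : ∃ a, T = {a, a + 1} := by
  set M := T.max' hne with hM
  have hMem : M ∈ T := T.max'_mem hne
  have h1 : M - 1 ∈ T := by
    rcases hA M hMem with h | h
    · exact h
    · have := T.le_max' _ h; omega
  refine ⟨M - 1, ?_⟩
  have hsub : ({M - 1, M} : Finset ℤ) ⊆ T := by
    intro x hx; simp at hx; rcases hx with rfl | rfl <;> assumption
  have : ({M - 1, M} : Finset ℤ).card = 2 := Finset.card_pair (by omega)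
  have heq := Finset.eq_of_subset_of_card_le hsub (by omega)
  have hM1 : M - 1 + 1 = M := by omega
  rw [hM1]
  exact heq.symm

lemma run3' {T : Finset ℤ} (hne : T.Nonempty) (hA : ∀ x ∈ T, x - 1 ∈ T ∨ x + 1 ∈ T)
    (hc : T.card = 3) : ∃ a, T = {a, a + 1, a + 2} := by
  set M := T.max' hne with hM
  set m := T.min' hne with hm
  have hMem : M ∈ T := T.max'_mem hne
  have hmem : m ∈ T := T.min'_mem hne
  have hbounds : ∀ x ∈ T, m ≤ x ∧ x ≤ M := fun x hx => ⟨T.min'_le x hx, T.le_max' x hx⟩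
  have h1 : M - 1 ∈ T := by
    rcases hA M hMem with h | h
    · exact h
    · have := T.le_max' _ h; omega
  have h2 : m + 1 ∈ T := by
    rcases hA m hmem with h | h
    · have := T.min'_le _ h; omega
    · exact h
  have hmM : M = m + 2 := by
    by_contra hne2
    have hmle : m ≤ M - 1 := (hbounds _ h1).1
    rcases lt_trichotomy M (m + 2) with h | h | h
    · -- M ≤ m + 1, span ≤ 2
      have := card_le_span hbounds
      omega
    · exact hne2 h
    · -- m, m+1, M-1, M distinct
      have hsub : ({m, m + 1, M - 1, M} : Finset ℤ) ⊆ T := by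
        intro x hx; simp at hx; rcases hx with rfl | rfl | rfl | rfl <;> assumption
      have hc4 : ({m, m + 1, M - 1, M} : Finset ℤ).card = 4 := by
        rw [Finset.card_insert_of_notMem (by simp; omega),
          Finset.card_insert_of_notMem (by simp; omega),
          Finset.card_pair (by omega)]
      have := Finset.card_le_card hsub
      omega
  refine ⟨m, ?_⟩
  have hsub : T ⊆ ({m, m + 1, m + 2} : Finset ℤ) := by
    intro x hx
    have := hbounds x hx
    simp only [Finset.mem_insert, Finset.mem_singleton]
    omega
  have hc3 : ({m, m + 1, m + 2} : Finset ℤ).card = 3 := by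
    rw [Finset.card_insert_of_notMem (by simp only [Finset.mem_insert, Finset.mem_singleton]; omega), Finset.card_pair (by omega)]
  exact Finset.eq_of_subset_of_card_le hsub (by omega)


section Structure

variable {S : Finset (ℤ × ℤ)}

lemma top_cand {Y x : ℤ} (hY : ∀ p ∈ S, p.2 ≤ Y) {q : ℤ × ℤ} (hq : q ∈ S)
    (hj : Adj (x, Y) q) : q = (x + 1, Y) ∨ q = (x - 1, Y) ∨ q = (x, Y - 1) := by
  have hb := hY q hq
  rcases adj_cases hj with h | h | h | h <;> subst h <;> simp_all

lemma bot_cand {Y x : ℤ} (hY : ∀ p ∈ S, Y ≤ p.2) {q : ℤ × ℤ} (hq : q ∈ S)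
    (hj : Adj (x, Y) q) : q = (x + 1, Y) ∨ q = (x - 1, Y) ∨ q = (x, Y + 1) := by
  have hb := hY q hq
  rcases adj_cases hj with h | h | h | h <;> subst h <;> simp_all

lemma top_nbr (hdeg : ∀ p ∈ S, degIn S p = 2) {Y x : ℤ} (hY : ∀ p ∈ S, p.2 ≤ Y)
    (hx : (x, Y) ∈ S) : (x - 1, Y) ∈ S ∨ (x + 1, Y) ∈ S := by
  obtain ⟨q1, q2, h12, m1, j1, m2, j2, -⟩ := deg2_pair (hdeg _ hx)
  have c1 := top_cand hY m1 j1
  have c2 := top_cand hY m2 j2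
  by_contra hc
  push_neg at hc
  rcases c1 with rfl | rfl | rfl <;> rcases c2 with rfl | rfl | rfl <;> tauto

lemma bot_nbr (hdeg : ∀ p ∈ S, degIn S p = 2) {Y x : ℤ} (hY : ∀ p ∈ S, Y ≤ p.2)
    (hx : (x, Y) ∈ S) : (x - 1, Y) ∈ S ∨ (x + 1, Y) ∈ S := by
  obtain ⟨q1, q2, h12, m1, j1, m2, j2, -⟩ := deg2_pair (hdeg _ hx)
  have c1 := bot_cand hY m1 j1
  have c2 := bot_cand hY m2 j2
  by_contra hc
  push_neg at hc
  rcases c1 with rfl | rfl | rfl <;> rcases c2 with rfl | rfl | rfl <;> tauto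

lemma top_end_right (hdeg : ∀ p ∈ S, degIn S p = 2) {Y x : ℤ} (hY : ∀ p ∈ S, p.2 ≤ Y)
    (hx : (x, Y) ∈ S) (hr : (x + 1, Y) ∈ S) (hnl : (x - 1, Y) ∉ S) : (x, Y - 1) ∈ S := by
  obtain ⟨q1, q2, h12, m1, j1, m2, j2, hall⟩ := deg2_pair (hdeg _ hx)
  have c1 := top_cand hY m1 j1
  have c2 := top_cand hY m2 j2
  by_contra hd
  rcases c1 with rfl | rfl | rfl <;> rcases c2 with rfl | rfl | rfl <;> tauto

lemma top_end_left (hdeg : ∀ p ∈ S, degIn S p = 2) {Y x : ℤ} (hY : ∀ p ∈ S, p.2 ≤ Y)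
    (hx : (x, Y) ∈ S) (hr : (x - 1, Y) ∈ S) (hnl : (x + 1, Y) ∉ S) : (x, Y - 1) ∈ S := by
  obtain ⟨q1, q2, h12, m1, j1, m2, j2, hall⟩ := deg2_pair (hdeg _ hx)
  have c1 := top_cand hY m1 j1
  have c2 := top_cand hY m2 j2
  by_contra hd
  rcases c1 with rfl | rfl | rfl <;> rcases c2 with rfl | rfl | rfl <;> tauto

lemma bot_end_right (hdeg : ∀ p ∈ S, degIn S p = 2) {Y x : ℤ} (hY : ∀ p ∈ S, Y ≤ p.2)
    (hx : (x, Y) ∈ S) (hr : (x + 1, Y) ∈ S) (hnl : (x - 1, Y) ∉ S) : (x, Y + 1) ∈ S := by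
  obtain ⟨q1, q2, h12, m1, j1, m2, j2, hall⟩ := deg2_pair (hdeg _ hx)
  have c1 := bot_cand hY m1 j1
  have c2 := bot_cand hY m2 j2
  by_contra hd
  rcases c1 with rfl | rfl | rfl <;> rcases c2 with rfl | rfl | rfl <;> tauto

lemma bot_end_left (hdeg : ∀ p ∈ S, degIn S p = 2) {Y x : ℤ} (hY : ∀ p ∈ S, Y ≤ p.2)
    (hx : (x, Y) ∈ S) (hr : (x - 1, Y) ∈ S) (hnl : (x + 1, Y) ∉ S) : (x, Y + 1) ∈ S := by
  obtain ⟨q1, q2, h12, m1, j1, m2, j2, hall⟩ := deg2_pair (hdeg _ hx)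
  have c1 := bot_cand hY m1 j1
  have c2 := bot_cand hY m2 j2
  by_contra hd
  rcases c1 with rfl | rfl | rfl <;> rcases c2 with rfl | rfl | rfl <;> tauto

lemma closedSubset {C : Finset (ℤ × ℤ)} (hconn : ConnectedIn S) {c0 : ℤ × ℤ}
    (hc0S : c0 ∈ S) (hc0C : c0 ∈ C)
    (hcl : ∀ c ∈ C, ∀ q ∈ S, Adj c q → q ∈ C) : S ⊆ C := by
  intro q hq
  have h := hconn c0 hc0S q hq
  clear hq
  induction h with
  | refl => exact hc0C
  | tail h1 h2 ih => exact hcl _ ih _ h2.2.1 h2.2.2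

end Structure

section Closure2

variable {S : Finset (ℤ × ℤ)}

lemma closure2top (hl : IsLoop S) {Y a : ℤ} (hY : ∀ p ∈ S, p.2 ≤ Y)
    (hT : ∀ x : ℤ, (x, Y) ∈ S ↔ x = a ∨ x = a + 1) : S.card = 4 := by
  have hdeg := hl.2
  have ha : (a, Y) ∈ S := (hT a).mpr (Or.inl rfl)
  have ha1 : (a + 1, Y) ∈ S := (hT (a + 1)).mpr (Or.inr rfl)
  have hnl : (a - 1, Y) ∉ S := fun h => by have := (hT _).mp h; omega
  have hnr : (a + 2, Y) ∉ S := fun h => by have := (hT _).mp h; omega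
  have d0 : (a, Y - 1) ∈ S := top_end_right hdeg hY ha ha1 hnl
  have d1 : (a + 1, Y - 1) ∈ S := by
    have := top_end_left hdeg hY ha1 (by rw [show a + 1 - 1 = a by ring]; exact ha)
      (by rw [show a + 1 + 1 = a + 2 by ring]; exact hnr)
    exact this
  set C : Finset (ℤ × ℤ) := ({a, a + 1} : Finset ℤ) ×ˢ ({Y - 1, Y} : Finset ℤ) with hC
  have memC : ∀ p : ℤ × ℤ, p ∈ C ↔ (p.1 = a ∨ p.1 = a + 1) ∧ (p.2 = Y - 1 ∨ p.2 = Y) := by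
    intro p
    rw [hC, Finset.mem_product]
    simp
  have hne1 : ((a, Y) : ℤ × ℤ) ≠ (a + 1, Y - 1) := by
    intro h; rw [Prod.mk.injEq] at h; omega
  have hne2 : ((a + 1, Y) : ℤ × ℤ) ≠ (a, Y - 1) := by
    intro h; rw [Prod.mk.injEq] at h; omega
  have hclosed : ∀ c ∈ C, ∀ q ∈ S, Adj c q → q ∈ C := by
    intro c hc q hq hadj
    have hc4 : c = (a, Y - 1) ∨ c = (a + 1, Y - 1) ∨ c = (a, Y) ∨ c = (a + 1, Y) := by
      rw [memC] at hc
      obtain ⟨cx, cy⟩ := c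
      simp only [Prod.mk.injEq] at hc ⊢
      tauto
    rcases hc4 with rfl | rfl | rfl | rfl
    · have h2 := deg2_only (hdeg _ d0) ha (by rw [adj_iff']; omega) d1 (by rw [adj_iff']; omega)
        hne1 q hq hadj
      rcases h2 with rfl | rfl <;> rw [memC] <;> simp
    · have h2 := deg2_only (hdeg _ d1) ha1 (by rw [adj_iff']; omega) d0 (by rw [adj_iff']; omega)
        hne2 q hq hadj
      rcases h2 with rfl | rfl <;> rw [memC] <;> simp
    · rcases top_cand hY hq hadj with rfl | rfl | rfl
      · rw [memC]; simp
      · exact absurd hq hnl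
      · rw [memC]; simp
    · rcases top_cand hY hq hadj with rfl | rfl | rfl
      · rw [show ((a + 1 + 1 : ℤ), Y) = (a + 2, Y) by rw [show (a + 1 + 1 : ℤ) = a + 2 by ring]] at hq
        exact absurd hq hnr
      · rw [memC]; simp
      · rw [memC]; simp
  have hsub : S ⊆ C := closedSubset hl.1.2 ha (by rw [memC]; simp) hclosed
  have hsup : C ⊆ S := by
    intro p hp
    rw [memC] at hp
    obtain ⟨h1, h2⟩ := hp
    obtain ⟨px, py⟩ := p
    simp only at h1 h2
    rcases h1 with rfl | rfl <;> rcases h2 with rfl | rfl <;> assumption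
  have : S = C := Finset.Subset.antisymm hsub hsup
  rw [this, hC, Finset.card_product, Finset.card_pair (by omega), Finset.card_pair (by omega)]

lemma closure2bot (hl : IsLoop S) {Y a : ℤ} (hY : ∀ p ∈ S, Y ≤ p.2)
    (hT : ∀ x : ℤ, (x, Y) ∈ S ↔ x = a ∨ x = a + 1) : S.card = 4 := by
  have hdeg := hl.2
  have ha : (a, Y) ∈ S := (hT a).mpr (Or.inl rfl)
  have ha1 : (a + 1, Y) ∈ S := (hT (a + 1)).mpr (Or.inr rfl)
  have hnl : (a - 1, Y) ∉ S := fun h => by have := (hT _).mp h; omega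
  have hnr : (a + 2, Y) ∉ S := fun h => by have := (hT _).mp h; omega
  have d0 : (a, Y + 1) ∈ S := bot_end_right hdeg hY ha ha1 hnl
  have d1 : (a + 1, Y + 1) ∈ S := by
    have := bot_end_left hdeg hY ha1 (by rw [show a + 1 - 1 = a by ring]; exact ha)
      (by rw [show a + 1 + 1 = a + 2 by ring]; exact hnr)
    exact this
  set C : Finset (ℤ × ℤ) := ({a, a + 1} : Finset ℤ) ×ˢ ({Y, Y + 1} : Finset ℤ) with hC
  have memC : ∀ p : ℤ × ℤ, p ∈ C ↔ (p.1 = a ∨ p.1 = a + 1) ∧ (p.2 = Y ∨ p.2 = Y + 1) := by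
    intro p
    rw [hC, Finset.mem_product]
    simp
  have hne1 : ((a, Y) : ℤ × ℤ) ≠ (a + 1, Y + 1) := by
    intro h; rw [Prod.mk.injEq] at h; omega
  have hne2 : ((a + 1, Y) : ℤ × ℤ) ≠ (a, Y + 1) := by
    intro h; rw [Prod.mk.injEq] at h; omega
  have hclosed : ∀ c ∈ C, ∀ q ∈ S, Adj c q → q ∈ C := by
    intro c hc q hq hadj
    have hc4 : c = (a, Y + 1) ∨ c = (a + 1, Y + 1) ∨ c = (a, Y) ∨ c = (a + 1, Y) := by
      rw [memC] at hc
      obtain ⟨cx, cy⟩ := c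
      simp only [Prod.mk.injEq] at hc ⊢
      tauto
    rcases hc4 with rfl | rfl | rfl | rfl
    · have h2 := deg2_only (hdeg _ d0) ha (by rw [adj_iff']; omega) d1 (by rw [adj_iff']; omega)
        hne1 q hq hadj
      rcases h2 with rfl | rfl <;> rw [memC] <;> simp
    · have h2 := deg2_only (hdeg _ d1) ha1 (by rw [adj_iff']; omega) d0 (by rw [adj_iff']; omega)
        hne2 q hq hadj
      rcases h2 with rfl | rfl <;> rw [memC] <;> simp
    · rcases bot_cand hY hq hadj with rfl | rfl | rfl
      · rw [memC]; simp
      · exact absurd hq hnl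
      · rw [memC]; simp
    · rcases bot_cand hY hq hadj with rfl | rfl | rfl
      · rw [show ((a + 1 + 1 : ℤ), Y) = (a + 2, Y) by rw [show (a + 1 + 1 : ℤ) = a + 2 by ring]] at hq
        exact absurd hq hnr
      · rw [memC]; simp
      · rw [memC]; simp
  have hsub : S ⊆ C := closedSubset hl.1.2 ha (by rw [memC]; simp) hclosed
  have hsup : C ⊆ S := by
    intro p hp
    rw [memC] at hp
    obtain ⟨h1, h2⟩ := hp
    obtain ⟨px, py⟩ := p
    simp only at h1 h2
    rcases h1 with rfl | rfl <;> rcases h2 with rfl | rfl <;> assumption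
  have : S = C := Finset.Subset.antisymm hsub hsup
  rw [this, hC, Finset.card_product, Finset.card_pair (by omega), Finset.card_pair (by omega)]

end Closure2

def ringSet : Finset (ℤ × ℤ) :=
  {((0:ℤ),(0:ℤ)), (1,0), (2,0), (2,1), (2,2), (1,2), (0,2), (0,1)}

lemma master {S : Finset (ℤ × ℤ)} (hl : IsLoop S) (ha : Admissible S)
    (hh : ∃ p ∈ S, ∃ q ∈ S, p.2 + 2 ≤ q.2) (hcard : S.card ≤ 8) :
    S.card = 8 ∧ ∃ v : ℤ × ℤ, S = ringSet.image (fun p => p + v) := by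
  classical
  have hdeg := hl.2
  have hconn := hl.1.2
  have hne : S.Nonempty := hl.1.1
  have hne2 : (S.image Prod.snd).Nonempty := hne.image _
  set y0 := (S.image Prod.snd).min' hne2 with hy0
  set y1 := (S.image Prod.snd).max' hne2 with hy1
  have hY1 : ∀ p ∈ S, p.2 ≤ y1 := fun p hp => Finset.le_max' _ _ (Finset.mem_image_of_mem _ hp)
  have hY0 : ∀ p ∈ S, y0 ≤ p.2 := fun p hp => Finset.min'_le _ _ (Finset.mem_image_of_mem _ hp)
  have h2 : y0 + 2 ≤ y1 := by
    obtain ⟨p, hp, q, hq, hpq⟩ := hh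
    have h1 := hY0 p hp
    have h2 := hY1 q hq
    omega
  -- top and bottom rows are nonempty
  have htopne : (rowX S y1).Nonempty := by
    have hmem : y1 ∈ S.image Prod.snd := Finset.max'_mem _ _
    obtain ⟨p, hp, hp2⟩ := Finset.mem_image.mp hmem
    exact ⟨p.1, mem_rowX.mpr (by rw [← hp2, Prod.mk.eta]; exact hp)⟩
  have hbotne : (rowX S y0).Nonempty := by
    have hmem : y0 ∈ S.image Prod.snd := Finset.min'_mem _ _
    obtain ⟨p, hp, hp2⟩ := Finset.mem_image.mp hmem
    exact ⟨p.1, mem_rowX.mpr (by rw [← hp2, Prod.mk.eta]; exact hp)⟩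
  -- neighbour property of rows
  have hAtop : ∀ x ∈ rowX S y1, x - 1 ∈ rowX S y1 ∨ x + 1 ∈ rowX S y1 := by
    intro x hx
    rw [mem_rowX] at hx
    rcases top_nbr hdeg hY1 hx with h | h
    · exact Or.inl (mem_rowX.mpr h)
    · exact Or.inr (mem_rowX.mpr h)
  have hAbot : ∀ x ∈ rowX S y0, x - 1 ∈ rowX S y0 ∨ x + 1 ∈ rowX S y0 := by
    intro x hx
    rw [mem_rowX] at hx
    rcases bot_nbr hdeg hY0 hx with h | h
    · exact Or.inl (mem_rowX.mpr h)
    · exact Or.inr (mem_rowX.mpr h)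
  have ht2 : 2 ≤ (rowX S y1).card := two_le_card' htopne hAtop
  have hb2 : 2 ≤ (rowX S y0).card := two_le_card' hbotne hAbot
  -- the row below the top has at least two cells
  have hm1 : 2 ≤ (rowX S (y1 - 1)).card := by
    set xm := (rowX S y1).min' htopne with hxm
    set xM := (rowX S y1).max' htopne with hxM
    have hlt : xm < xM := Finset.min'_lt_max'_of_card _ (by omega)
    have hxmS : (xm, y1) ∈ S := mem_rowX.mp ((rowX S y1).min'_mem htopne)
    have hxMS : (xM, y1) ∈ S := mem_rowX.mp ((rowX S y1).max'_mem htopne)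
    have hmnl : (xm - 1, y1) ∉ S := by
      intro h
      have := Finset.min'_le _ _ (mem_rowX.mpr h)
      omega
    have hMnr : (xM + 1, y1) ∉ S := by
      intro h
      have := Finset.le_max' _ _ (mem_rowX.mpr h)
      omega
    have hmr : (xm + 1, y1) ∈ S := by
      rcases top_nbr hdeg hY1 hxmS with h | h
      · exact absurd h hmnl
      · exact h
    have hMl : (xM - 1, y1) ∈ S := by
      rcases top_nbr hdeg hY1 hxMS with h | h
      · exact h
      · exact absurd h hMnr
    have d1 : (xm, y1 - 1) ∈ S := top_end_right hdeg hY1 hxmS hmr hmnl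
    have d2 : (xM, y1 - 1) ∈ S := top_end_left hdeg hY1 hxMS hMl hMnr
    have hsub : ({xm, xM} : Finset ℤ) ⊆ rowX S (y1 - 1) := by
      intro x hx
      simp only [Finset.mem_insert, Finset.mem_singleton] at hx
      rcases hx with rfl | rfl
      · exact mem_rowX.mpr d1
      · exact mem_rowX.mpr d2
    have := Finset.card_le_card hsub
    rwa [Finset.card_pair (by omega)] at this
  -- the row above the bottom has at least two cells
  have hm2 : 2 ≤ (rowX S (y0 + 1)).card := by
    set xm := (rowX S y0).min' hbotne with hxm
    set xM := (rowX S y0).max' hbotne with hxM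
    have hlt : xm < xM := Finset.min'_lt_max'_of_card _ (by omega)
    have hxmS : (xm, y0) ∈ S := mem_rowX.mp ((rowX S y0).min'_mem hbotne)
    have hxMS : (xM, y0) ∈ S := mem_rowX.mp ((rowX S y0).max'_mem hbotne)
    have hmnl : (xm - 1, y0) ∉ S := by
      intro h
      have := Finset.min'_le _ _ (mem_rowX.mpr h)
      omega
    have hMnr : (xM + 1, y0) ∉ S := by
      intro h
      have := Finset.le_max' _ _ (mem_rowX.mpr h)
      omega
    have hmr : (xm + 1, y0) ∈ S := by
      rcases bot_nbr hdeg hY0 hxmS with h | h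
      · exact absurd h hmnl
      · exact h
    have hMl : (xM - 1, y0) ∈ S := by
      rcases bot_nbr hdeg hY0 hxMS with h | h
      · exact h
      · exact absurd h hMnr
    have d1 : (xm, y0 + 1) ∈ S := bot_end_right hdeg hY0 hxmS hmr hmnl
    have d2 : (xM, y0 + 1) ∈ S := bot_end_left hdeg hY0 hxMS hMl hMnr
    have hsub : ({xm, xM} : Finset ℤ) ⊆ rowX S (y0 + 1) := by
      intro x hx
      simp only [Finset.mem_insert, Finset.mem_singleton] at hx
      rcases hx with rfl | rfl
      · exact mem_rowX.mpr d1
      · exact mem_rowX.mpr d2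
    have := Finset.card_le_card hsub
    rwa [Finset.card_pair (by omega)] at this
  -- if the top row has exactly two cells then S is a 2x2 square
  have htop2 : (rowX S y1).card = 2 → S.card = 4 := by
    intro hc
    obtain ⟨a, hTa⟩ := run2' htopne hAtop hc
    exact closure2top (a := a) hl hY1 (by intro x; rw [← mem_rowX, hTa]; simp)
  have hbot2 : (rowX S y0).card = 2 → S.card = 4 := by
    intro hc
    obtain ⟨a, hTa⟩ := run2' hbotne hAbot hc
    exact closure2bot (a := a) hl hY0 (by intro x; rw [← mem_rowX, hTa]; simp)
  -- case on the height
  rcases lt_or_ge y1 (y0 + 3) with hcase | hcase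
  · -- height exactly 2
    have e2 : y1 = y0 + 2 := by omega
    have hrows : ∀ p ∈ S, p.2 = y0 ∨ p.2 = y0 + 1 ∨ p.2 = y0 + 2 := by
      intro p hp
      have := hY0 p hp
      have := hY1 p hp
      omega
    have hcnt := card_three_rows hrows
    rw [← e2] at hcnt
    have e1 : y1 - 1 = y0 + 1 := by omega
    rw [e1] at hm1
    -- top row has exactly 3 cells
    have ht3 : (rowX S y1).card = 3 := by
      rcases Nat.lt_or_ge (rowX S y1).card 3 with h | h
      · exfalso
        have := htop2 (by omega)
        omega
      rcases Nat.lt_or_ge (rowX S y1).card 4 with h' | h'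
      · omega
      · exfalso
        have hb3 : 3 ≤ (rowX S y0).card := by
          by_contra hb
          have := hbot2 (by omega)
          omega
        omega
    have hb3 : (rowX S y0).card = 3 := by
      rcases Nat.lt_or_ge (rowX S y0).card 3 with h | h
      · exfalso
        have := hbot2 (by omega)
        omega
      · omega
    have hmid2 : (rowX S (y0 + 1)).card = 2 := by omega
    have hc8 : S.card = 8 := by omega
    -- identify the three rows
    obtain ⟨a, hTa⟩ := run3' htopne hAtop ht3
    obtain ⟨c, hBc⟩ := run3' hbotne hAbot hb3
    have hTiff : ∀ x : ℤ, (x, y1) ∈ S ↔ (x = a ∨ x = a + 1 ∨ x = a + 2) := by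
      intro x
      rw [← mem_rowX, hTa]
      simp
    have hBiff : ∀ x : ℤ, (x, y0) ∈ S ↔ (x = c ∨ x = c + 1 ∨ x = c + 2) := by
      intro x
      rw [← mem_rowX, hBc]
      simp
    -- downs of the top row ends
    have da : (a, y1 - 1) ∈ S := by
      refine top_end_right hdeg hY1 ((hTiff a).mpr (by omega)) ((hTiff (a+1)).mpr (by omega)) ?_
      intro h
      have := (hTiff _).mp h
      omega
    have da2 : (a + 2, y1 - 1) ∈ S := by
      refine top_end_left hdeg hY1 ((hTiff (a+2)).mpr (by omega)) ?_ ?_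
      · rw [show a + 2 - 1 = a + 1 by ring]
        exact (hTiff (a+1)).mpr (by omega)
      · intro h
        have := (hTiff _).mp h
        omega
    rw [e1] at da da2
    -- ups of the bottom row ends
    have uc : (c, y0 + 1) ∈ S := by
      refine bot_end_right hdeg hY0 ((hBiff c).mpr (by omega)) ((hBiff (c+1)).mpr (by omega)) ?_
      intro h
      have := (hBiff _).mp h
      omega
    have uc2 : (c + 2, y0 + 1) ∈ S := by
      refine bot_end_left hdeg hY0 ((hBiff (c+2)).mpr (by omega)) ?_ ?_
      · rw [show c + 2 - 1 = c + 1 by ring]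
        exact (hBiff (c+1)).mpr (by omega)
      · intro h
        have := (hBiff _).mp h
        omega
    -- middle row is exactly {a, a+2}
    have hMsub : ({a, a + 2} : Finset ℤ) ⊆ rowX S (y0 + 1) := by
      intro x hx
      simp only [Finset.mem_insert, Finset.mem_singleton] at hx
      rcases hx with rfl | rfl
      · exact mem_rowX.mpr da
      · exact mem_rowX.mpr da2
    have hMeq : ({a, a + 2} : Finset ℤ) = rowX S (y0 + 1) :=
      Finset.eq_of_subset_of_card_le hMsub (by rw [Finset.card_pair (by omega)]; omega)
    have hMiff : ∀ x : ℤ, (x, y0 + 1) ∈ S ↔ (x = a ∨ x = a + 2) := by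
      intro x
      rw [← mem_rowX, ← hMeq]
      simp
    -- bottom run starts at a
    have hca : c = a := by
      have h1 := (hMiff c).mp uc
      have h2 := (hMiff (c + 2)).mp uc2
      omega
    subst hca
    refine ⟨hc8, (c, y0), ?_⟩
    have key : ∀ u v : ℤ, ((u, v) : ℤ × ℤ) + (c, y0) = (u + c, v + y0) := fun u v => rfl
    apply Finset.Subset.antisymm
    · intro p hp
      have hy := hrows _ hp
      obtain ⟨x, y⟩ := p
      simp only at hy
      simp only [ringSet, Finset.mem_image, Finset.mem_insert, Finset.mem_singleton]
      rcases hy with rfl | rfl | rfl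
      · rcases (hBiff x).mp hp with rfl | rfl | rfl
        · exact ⟨(0, 0), by simp, by rw [key, Prod.mk.injEq]; omega⟩
        · exact ⟨(1, 0), by simp, by rw [key, Prod.mk.injEq]; omega⟩
        · exact ⟨(2, 0), by simp, by rw [key, Prod.mk.injEq]; omega⟩
      · rcases (hMiff x).mp hp with rfl | rfl
        · exact ⟨(0, 1), by simp, by rw [key, Prod.mk.injEq]; omega⟩
        · exact ⟨(2, 1), by simp, by rw [key, Prod.mk.injEq]; omega⟩
      · rcases (hTiff x).mp (by rw [e2]; exact hp) with rfl | rfl | rfl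
        · exact ⟨(0, 2), by simp, by rw [key, Prod.mk.injEq]; omega⟩
        · exact ⟨(1, 2), by simp, by rw [key, Prod.mk.injEq]; omega⟩
        · exact ⟨(2, 2), by simp, by rw [key, Prod.mk.injEq]; omega⟩
    · intro p hp
      simp only [ringSet, Finset.mem_image, Finset.mem_insert, Finset.mem_singleton] at hp
      obtain ⟨q, hq, hpe⟩ := hp
      subst hpe
      rcases hq with rfl | rfl | rfl | rfl | rfl | rfl | rfl | rfl
      · rw [key, show (0:ℤ) + c = c by ring, show (0:ℤ) + y0 = y0 by ring]
        exact (hBiff _).mpr (by omega)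
      · rw [key, show (1:ℤ) + c = c + 1 by ring, show (0:ℤ) + y0 = y0 by ring]
        exact (hBiff _).mpr (by omega)
      · rw [key, show (2:ℤ) + c = c + 2 by ring, show (0:ℤ) + y0 = y0 by ring]
        exact (hBiff _).mpr (by omega)
      · rw [key, show (2:ℤ) + c = c + 2 by ring, show (1:ℤ) + y0 = y0 + 1 by ring]
        exact (hMiff _).mpr (by omega)
      · rw [key, show (2:ℤ) + c = c + 2 by ring, show (2:ℤ) + y0 = y0 + 2 by ring, ← e2]
        exact (hTiff _).mpr (by omega)
      · rw [key, show (1:ℤ) + c = c + 1 by ring, show (2:ℤ) + y0 = y0 + 2 by ring, ← e2]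
        exact (hTiff _).mpr (by omega)
      · rw [key, show (0:ℤ) + c = c by ring, show (2:ℤ) + y0 = y0 + 2 by ring, ← e2]
        exact (hTiff _).mpr (by omega)
      · rw [key, show (0:ℤ) + c = c by ring, show (1:ℤ) + y0 = y0 + 1 by ring]
        exact (hMiff _).mpr (by omega)
  · -- height at least 3: contradiction
    exfalso
    have hsum := card_four_rows_le (S := S) (k1 := y1) (k2 := y1 - 1) (k3 := y0 + 1) (k4 := y0)
      (by omega) (by omega) (by omega) (by omega) (by omega) (by omega)
    have ht3 : 3 ≤ (rowX S y1).card := by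
      by_contra h
      have := htop2 (by omega)
      omega
    have hb3 : 3 ≤ (rowX S y0).card := by
      by_contra h
      have := hbot2 (by omega)
      omega
    omega

/-! ### Swap machinery -/

def swapF : ℤ × ℤ → ℤ × ℤ := fun p => (p.2, p.1)

lemma swapF_invol : Function.Involutive swapF := fun p => rfl

lemma swapF_inj : Function.Injective swapF := swapF_invol.injective

lemma adj_swapF {p q : ℤ × ℤ} : Adj (swapF p) (swapF q) ↔ Adj p q := by
  obtain ⟨a, b⟩ := p; obtain ⟨c, d⟩ := q
  unfold swapF
  rw [adj_iff', adj_iff']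
  omega

lemma adj_swapF' {p q : ℤ × ℤ} : Adj (swapF p) q ↔ Adj p (swapF q) := by
  obtain ⟨a, b⟩ := p; obtain ⟨c, d⟩ := q
  unfold swapF
  rw [adj_iff', adj_iff']
  omega

lemma mem_swapF {S : Finset (ℤ × ℤ)} {p : ℤ × ℤ} :
    p ∈ S.image swapF ↔ swapF p ∈ S := by
  rw [Finset.mem_image]
  constructor
  · rintro ⟨q, hq, rfl⟩
    rwa [swapF_invol q]
  · intro h
    exact ⟨swapF p, h, swapF_invol p⟩

lemma isloop_swapF {S : Finset (ℤ × ℤ)} (hl : IsLoop S) : IsLoop (S.image swapF) := by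
  obtain ⟨⟨hne, hconn⟩, hdeg⟩ := hl
  refine ⟨⟨hne.image _, ?_⟩, ?_⟩
  · intro p hp q hq
    rw [mem_swapF] at hp hq
    have h := hconn _ hp _ hq
    have hlift : Relation.ReflTransGen (fun a b => a ∈ S.image swapF ∧ b ∈ S.image swapF ∧ Adj a b)
        (swapF (swapF p)) (swapF (swapF q)) := Relation.ReflTransGen.lift (r := fun a b => a ∈ S ∧ b ∈ S ∧ Adj a b)
      (p := fun a b => a ∈ S.image swapF ∧ b ∈ S.image swapF ∧ Adj a b) swapF
      (fun a b hab => ⟨by rw [mem_swapF, swapF_invol]; exact hab.1,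
        by rw [mem_swapF, swapF_invol]; exact hab.2.1,
        by rw [adj_swapF]; exact hab.2.2⟩) _ _ h
    rwa [swapF_invol, swapF_invol] at hlift
  · intro p hp
    rw [mem_swapF] at hp
    have hfil : (S.image swapF).filter (fun q => Adj p q) =
        (S.filter fun q => Adj (swapF p) q).image swapF := by
      ext q
      simp only [Finset.mem_filter, Finset.mem_image]
      constructor
      · rintro ⟨⟨r, hr, rfl⟩, hadj⟩
        exact ⟨r, ⟨hr, adj_swapF'.mpr hadj⟩, rfl⟩
      · rintro ⟨r, ⟨hr, hadj⟩, rfl⟩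
        exact ⟨⟨r, hr, rfl⟩, adj_swapF'.mp hadj⟩
    rw [degIn_eq, hfil, Finset.card_image_of_injective _ swapF_inj, ← degIn_eq]
    exact hdeg _ hp

lemma adm_swapF {S : Finset (ℤ × ℤ)} (ha : Admissible S) : Admissible (S.image swapF) := by
  rintro ⟨p, v, hv, h0, h1, h2, h3⟩
  rw [mem_swapF] at h0 h1 h2 h3
  have e1 : swapF (p + v) = swapF p + swapF v := rfl
  have e2 : swapF (p + (2:ℤ) • v) = swapF p + (2:ℤ) • swapF v := rfl
  have e3 : swapF (p + (3:ℤ) • v) = swapF p + (3:ℤ) • swapF v := rfl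
  rw [e1] at h1
  rw [e2] at h2
  rw [e3] at h3
  refine ha ⟨swapF p, swapF v, ?_, h0, h1, h2, h3⟩
  intro h
  apply hv
  obtain ⟨a, b⟩ := v
  simp only [swapF, Prod.mk.injEq, Prod.ext_iff] at h ⊢
  exact ⟨h.2, h.1⟩

lemma card_swapF (S : Finset (ℤ × ℤ)) : (S.image swapF).card = S.card :=
  Finset.card_image_of_injective _ swapF_inj

/-! ### Lattice isometries -/

lemma iso_translate (v : ℤ × ℤ) : IsLatticeIso (fun p => p + v) := by
  constructor
  · constructor
    · intro a b h
      simpa using congrArg (fun q => q - v) h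
    · intro q
      exact ⟨q - v, by simp⟩
  · intro p q
    obtain ⟨a, b⟩ := p; obtain ⟨c, d⟩ := q; obtain ⟨e, f⟩ := v
    simp only [Prod.fst_add, Prod.snd_add]
    ring

lemma iso_swapF : IsLatticeIso swapF := by
  constructor
  · exact swapF_invol.bijective
  · intro p q
    obtain ⟨a, b⟩ := p; obtain ⟨c, d⟩ := q
    show (b - d) ^ 2 + (a - c) ^ 2 = (a - c) ^ 2 + (b - d) ^ 2
    ring

lemma iso_comp {f g : ℤ × ℤ → ℤ × ℤ} (hf : IsLatticeIso f) (hg : IsLatticeIso g) :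
    IsLatticeIso (g ∘ f) := by
  constructor
  · exact hg.1.comp hf.1
  · intro p q
    rw [Function.comp_apply, Function.comp_apply, hg.2, hf.2]

/-! ### The ring is an admissible loop of length 8 -/

lemma ringSet_card : ringSet.card = 8 := by decide

lemma ringSet_deg : ∀ p ∈ ringSet, degIn ringSet p = 2 := by
  intro p hp
  rw [degIn_eq]
  fin_cases hp <;> decide

lemma ringSet_conn : ConnectedIn ringSet := by
  set r : ℤ × ℤ → ℤ × ℤ → Prop := fun a b => a ∈ ringSet ∧ b ∈ ringSet ∧ Adj a b with hr
  have hs : ∀ a b : ℤ × ℤ, a ∈ ringSet → b ∈ ringSet → Adj a b → Relation.ReflTransGen r a b :=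
    fun a b h1 h2 h3 => Relation.ReflTransGen.single ⟨h1, h2, h3⟩
  have p1 : Relation.ReflTransGen r (0, 0) (1, 0) := hs _ _ (by decide) (by decide) (by decide)
  have p2 : Relation.ReflTransGen r (0, 0) (2, 0) :=
    p1.trans (hs _ _ (by decide) (by decide) (by decide))
  have p3 : Relation.ReflTransGen r (0, 0) (2, 1) :=
    p2.trans (hs _ _ (by decide) (by decide) (by decide))
  have p4 : Relation.ReflTransGen r (0, 0) (2, 2) :=
    p3.trans (hs _ _ (by decide) (by decide) (by decide))
  have p5 : Relation.ReflTransGen r (0, 0) (1, 2) :=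
    p4.trans (hs _ _ (by decide) (by decide) (by decide))
  have p6 : Relation.ReflTransGen r (0, 0) (0, 2) :=
    p5.trans (hs _ _ (by decide) (by decide) (by decide))
  have p7 : Relation.ReflTransGen r (0, 0) (0, 1) :=
    p6.trans (hs _ _ (by decide) (by decide) (by decide))
  have path : ∀ p ∈ ringSet, Relation.ReflTransGen r (0, 0) p := by
    intro p hp
    fin_cases hp
    · exact Relation.ReflTransGen.refl
    · exact p1
    · exact p2
    · exact p3
    · exact p4
    · exact p5
    · exact p6
    · exact p7
  have hsymm : Symmetric r := by
    rintro a b ⟨h1, h2, h3⟩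
    exact ⟨h2, h1, adj_symm h3⟩
  intro p hp q hq
  exact ((@Std.Symm.symm _ _ (@Relation.ReflTransGen.stdSymm _ r ⟨fun a b h => hsymm h⟩) _ _ (path p hp))).trans (path q hq)

lemma ringSet_loop : IsLoop ringSet :=
  ⟨⟨⟨(0, 0), by decide⟩, ringSet_conn⟩, ringSet_deg⟩

lemma ringSet_adm : Admissible ringSet := by
  rintro ⟨p, v, hv, h0, h1, h2, h3⟩
  obtain ⟨px, py⟩ := p
  obtain ⟨vx, vy⟩ := v
  have hb : ∀ q ∈ ringSet, 0 ≤ q.1 ∧ q.1 ≤ 2 ∧ 0 ≤ q.2 ∧ q.2 ≤ 2 := by decide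
  have e3 : ((px, py) : ℤ × ℤ) + (3 : ℤ) • (vx, vy) = (px + 3 * vx, py + 3 * vy) := by
    rw [Prod.smul_mk, Prod.mk_add_mk, smul_eq_mul, smul_eq_mul]
  rw [e3] at h3
  have b0 := hb _ h0
  have b3 := hb _ h3
  simp only at b0 b3
  simp only [Prod.ext_iff, Prod.fst_zero, Prod.snd_zero, ne_eq] at hv
  rw [not_and_or] at hv
  rcases hv with hv | hv
  · apply hv; omega
  · apply hv; omega

/-! ### Small extent gives at most four cells -/

lemma small_card {S : Finset (ℤ × ℤ)} (hne : S.Nonempty)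
    (hh : ∀ p ∈ S, ∀ q ∈ S, q.2 < p.2 + 2) (hw : ∀ p ∈ S, ∀ q ∈ S, q.1 < p.1 + 2) :
    S.card ≤ 4 := by
  have hne1 : (S.image Prod.fst).Nonempty := hne.image _
  have hne2 : (S.image Prod.snd).Nonempty := hne.image _
  set x0 := (S.image Prod.fst).min' hne1 with hx0
  set y0 := (S.image Prod.snd).min' hne2 with hy0
  obtain ⟨px, hpx, hpxe⟩ := Finset.mem_image.mp ((S.image Prod.fst).min'_mem hne1)
  obtain ⟨py, hpy, hpye⟩ := Finset.mem_image.mp ((S.image Prod.snd).min'_mem hne2)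
  have hsub : S ⊆ ({x0, x0 + 1} : Finset ℤ) ×ˢ ({y0, y0 + 1} : Finset ℤ) := by
    intro q hq
    rw [Finset.mem_product]
    have h1 : x0 ≤ q.1 := Finset.min'_le _ _ (Finset.mem_image_of_mem _ hq)
    have h2 : y0 ≤ q.2 := Finset.min'_le _ _ (Finset.mem_image_of_mem _ hq)
    have h3 := hw px hpx q hq
    have h4 := hh py hpy q hq
    simp only [Finset.mem_insert, Finset.mem_singleton]
    omega
  have hc := Finset.card_le_card hsub
  have hc2 : (({x0, x0 + 1} : Finset ℤ) ×ˢ ({y0, y0 + 1} : Finset ℤ)).card = 4 := by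
    rw [Finset.card_product, Finset.card_pair (by omega), Finset.card_pair (by omega)]
  omega

/-! ### The final theorem -/


theorem shortest_nontrivial_admissible_loop :
    (∀ S : Finset (ℤ × ℤ), IsLoop S → Admissible S → 4 < S.card → 8 ≤ S.card) ∧
    (∃ S : Finset (ℤ × ℤ), IsLoop S ∧ Admissible S ∧ S.card = 8) ∧
    (∀ S : Finset (ℤ × ℤ), IsLoop S → Admissible S → S.card = 8 →
      IsoEquiv S ({((0:ℤ),(0:ℤ)), (1,0), (2,0), (2,1), (2,2), (1,2), (0,2), (0,1)} : Finset (ℤ × ℤ))) := by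
  have hswapext : ∀ S : Finset (ℤ × ℤ), (∃ p ∈ S, ∃ q ∈ S, p.1 + 2 ≤ q.1) →
      ∃ p ∈ S.image swapF, ∃ q ∈ S.image swapF, p.2 + 2 ≤ q.2 := by
    rintro S ⟨p, hp, q, hq, h⟩
    refine ⟨swapF p, mem_swapF.mpr (by rw [swapF_invol]; exact hp),
      swapF q, mem_swapF.mpr (by rw [swapF_invol]; exact hq), h⟩
  refine ⟨?_, ⟨ringSet, ringSet_loop, ringSet_adm, ringSet_card⟩, ?_⟩
  · -- part 1
    intro S hl ha h4
    by_contra h8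
    push_neg at h8
    have hcard : S.card ≤ 8 := by omega
    by_cases hh : ∃ p ∈ S, ∃ q ∈ S, p.2 + 2 ≤ q.2
    · have := (master hl ha hh hcard).1
      omega
    · by_cases hw : ∃ p ∈ S, ∃ q ∈ S, p.1 + 2 ≤ q.1
      · have hcard' : (S.image swapF).card ≤ 8 := by rw [card_swapF]; omega
        have := (master (isloop_swapF hl) (adm_swapF ha) (hswapext S hw) hcard').1
        rw [card_swapF] at this
        omega
      · push_neg at hh hw
        have := small_card hl.1.1 hh hw
        omega
  · -- part 3
    intro S hl ha hc8
    by_cases hh : ∃ p ∈ S, ∃ q ∈ S, p.2 + 2 ≤ q.2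
    · obtain ⟨-, v, hv⟩ := master hl ha hh (le_of_eq hc8)
      refine ⟨fun p => p + (-v), iso_translate (-v), ?_⟩
      rw [hv, Finset.image_image]
      have hid : ((fun p => p + (-v)) ∘ (fun p => p + v)) = id := by
        funext x
        simp
      rw [hid, Finset.image_id]
      rfl
    · by_cases hw : ∃ p ∈ S, ∃ q ∈ S, p.1 + 2 ≤ q.1
      · have hcard' : (S.image swapF).card ≤ 8 := by rw [card_swapF]; omega
        obtain ⟨-, v, hv⟩ := master (isloop_swapF hl) (adm_swapF ha) (hswapext S hw) hcard'
        refine ⟨(fun p => p + (-v)) ∘ swapF, iso_comp iso_swapF (iso_translate (-v)), ?_⟩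
        rw [← Finset.image_image, hv, Finset.image_image]
        have hid : ((fun p => p + (-v)) ∘ (fun p => p + v)) = id := by
          funext x
          simp
        rw [hid, Finset.image_id]
        rfl
      · push_neg at hh hw
        have := small_card hl.1.1 hh hw
        omega
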